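/- In a staggered adoption design, the overall bias of the Callaway–Sant'Anna not-yet-treated estimator for cohort G_g at post-treatment relative period s (calendar time t = t_g + s − 1) satisfies δ^CS_{G_g,s} = Δ^CS_{G_g,s} + Σ_{k ∈ K_g(t)} w_k · (Δ^CS_{G_k, s_k(t)} − Δ^CS_{G_k, s_k(t_g−1)}), where K_g(t) = {k : t_g < t_k ≤ t}, s_k(u) = u − t_k + 1, and w_k = N_k/(Σ_{j=k}^G N_j + N_∞). -/

import Mathlib

open Finset

/-- Average of `Y0` over group `A` at period `t`. -/
noncomputable def avgAt14 {U : Type*} (Y0 : U → ℕ → ℝ) (A : Finset U) (t : ℕ) : ℝ :=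
  (∑ i ∈ A, Y0 i t) / (A.card : ℝ)

/-- Block bias of the cohort adopting at `u` for the Callaway–Sant'Anna
not-yet-treated estimator, evaluated at calendar time `t'`: trend of the cohort
minus trend of its initial control group `{j : u < adopt j}`, with reference
period `u − 1` (the last pre-treatment period of the cohort). -/
noncomputable def blockBiasCS {U : Type*} [Fintype U] (adopt : U → ℕ)
    (Y0 : U → ℕ → ℝ) (u t' : ℕ) : ℝ :=
  (avgAt14 Y0 (Finset.univ.filter (fun i => adopt i = u)) t'
      - avgAt14 Y0 (Finset.univ.filter (fun i => adopt i = u)) (u - 1))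
    - (avgAt14 Y0 (Finset.univ.filter (fun i => u < adopt i)) t'
      - avgAt14 Y0 (Finset.univ.filter (fun i => u < adopt i)) (u - 1))

/-- Adjustment weight of the cohort adopting at `u`:
`w_u = N_u / (N_u + |{j : adopt j > u}|)`, i.e. `N_k / (Σ_{j=k}^G N_j + N_∞)`. -/
noncomputable def weight14 {U : Type*} [Fintype U] (adopt : U → ℕ) (u : ℕ) : ℝ :=
  ((Finset.univ.filter (fun i : U => adopt i = u)).card : ℝ) /
    (((Finset.univ.filter (fun i : U => adopt i = u)).card : ℝ) +
      ((Finset.univ.filter (fun i : U => u < adopt i)).card : ℝ))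

/-- One-step partition identity: the trend (between `t1` and `t2`) of the
not-yet-treated group at `u` minus that of the not-yet-treated group at `u+1`
equals `w_{u+1}` times (trend of cohort `u+1` minus trend of group at `u+1`). -/
lemma csnyt_step {U : Type*} [Fintype U] [DecidableEq U]
    (adopt : U → ℕ) (Y0 : U → ℕ → ℝ) (u t1 t2 : ℕ) :
    (avgAt14 Y0 (Finset.univ.filter (fun i => u < adopt i)) t1
      - avgAt14 Y0 (Finset.univ.filter (fun i => u < adopt i)) t2)
    - (avgAt14 Y0 (Finset.univ.filter (fun i => u + 1 < adopt i)) t1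
      - avgAt14 Y0 (Finset.univ.filter (fun i => u + 1 < adopt i)) t2)
    = weight14 adopt (u + 1) *
      ((avgAt14 Y0 (Finset.univ.filter (fun i => adopt i = u + 1)) t1
        - avgAt14 Y0 (Finset.univ.filter (fun i => adopt i = u + 1)) t2)
      - (avgAt14 Y0 (Finset.univ.filter (fun i => u + 1 < adopt i)) t1
        - avgAt14 Y0 (Finset.univ.filter (fun i => u + 1 < adopt i)) t2)) := by
  classical
  set A := Finset.univ.filter (fun i : U => adopt i = u + 1) with hA
  set B := Finset.univ.filter (fun i : U => u + 1 < adopt i) with hB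
  have hset : Finset.univ.filter (fun i : U => u < adopt i) = A ∪ B := by
    ext i; simp [hA, hB]; omega
  have hdisj : Disjoint A B := by
    simp only [hA, hB, Finset.disjoint_left, Finset.mem_filter, Finset.mem_univ, true_and]
    intro i hi; omega
  have hcard : (Finset.univ.filter (fun i : U => u < adopt i)).card = A.card + B.card := by
    rw [hset, Finset.card_union_of_disjoint hdisj]
  have hsum : ∀ t, ∑ i ∈ Finset.univ.filter (fun i : U => u < adopt i), Y0 i t
      = ∑ i ∈ A, Y0 i t + ∑ i ∈ B, Y0 i t := by
    intro t; rw [hset, Finset.sum_union hdisj]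
  unfold avgAt14 weight14
  rw [hsum, hsum, hcard, ← hA, ← hB]
  rcases Nat.eq_zero_or_pos A.card with hAc | hAc
  · have hAe : A = ∅ := Finset.card_eq_zero.mp hAc
    simp [hAe]
  · rcases Nat.eq_zero_or_pos B.card with hBc | hBc
    · have hBe : B = ∅ := Finset.card_eq_zero.mp hBc
      have : (A.card : ℝ) ≠ 0 := by positivity
      simp only [hBe, Finset.sum_empty, Finset.card_empty, Nat.cast_zero, add_zero, div_zero, sub_zero, sub_self]
      field_simp
    · have h1 : (A.card : ℝ) ≠ 0 := by positivity
      have h2 : (B.card : ℝ) ≠ 0 := by positivity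
      have h3 : (A.card : ℝ) + (B.card : ℝ) ≠ 0 := by positivity
      push_cast
      field_simp
      ring

/-- Bias decomposition for the Callaway–Sant'Anna not-yet-treated estimator
(Proposition 2): the overall bias of cohort `G_g` (adopting at `tg`) at
post-treatment period `s` (calendar time `t = tg + s − 1`), defined against the
not-yet-treated control group `{j : t < adopt j}` with reference period `tg − 1`,
equals its own block bias plus the weighted sum over adjustment cohorts `u ∈ (tg,t]`
of the difference of two of their block biases (evaluated at `t` and at `tg − 1`). -/
theorem csnyt_bias_decomposition {U : Type*} [Fintype U] [DecidableEq U]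
    (T : ℕ) (adopt : U → ℕ) (Y0 : U → ℕ → ℝ)
    (hadopt : ∀ i, 2 ≤ adopt i)
    (hnever : ∃ j, T < adopt j)
    (tg s : ℕ) (htgT : tg ≤ T) (hcoh : ∃ i, adopt i = tg)
    (hs : 1 ≤ s) (ht : tg + s - 1 ≤ T) :
    (avgAt14 Y0 (Finset.univ.filter (fun i => adopt i = tg)) (tg + s - 1)
        - avgAt14 Y0 (Finset.univ.filter (fun i => adopt i = tg)) (tg - 1))
      - (avgAt14 Y0 (Finset.univ.filter (fun i => tg + s - 1 < adopt i)) (tg + s - 1)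
        - avgAt14 Y0 (Finset.univ.filter (fun i => tg + s - 1 < adopt i)) (tg - 1))
    = blockBiasCS adopt Y0 tg (tg + s - 1)
      + ∑ u ∈ Finset.Ioc tg (tg + s - 1),
          weight14 adopt u *
            (blockBiasCS adopt Y0 u (tg + s - 1) - blockBiasCS adopt Y0 u (tg - 1)) := by
  classical
  set t := tg + s - 1 with htdef
  have htg_le : tg ≤ t := by omega
  set F : ℕ → ℝ := fun u =>
    avgAt14 Y0 (Finset.univ.filter (fun i => u < adopt i)) t
      - avgAt14 Y0 (Finset.univ.filter (fun i => u < adopt i)) (tg - 1) with hF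
  have hstep : ∀ u, F u - F (u + 1)
      = weight14 adopt (u + 1) *
          (blockBiasCS adopt Y0 (u + 1) t - blockBiasCS adopt Y0 (u + 1) (tg - 1)) := by
    intro u
    have h := csnyt_step adopt Y0 u t (tg - 1)
    simp only [hF]
    rw [h]
    unfold blockBiasCS
    ring
  have htel : F tg - F t
      = ∑ u ∈ Finset.Ioc tg t,
          weight14 adopt u * (blockBiasCS adopt Y0 u t - blockBiasCS adopt Y0 u (tg - 1)) := by
    have h1 : Finset.Ioc tg t = Finset.Ico (tg + 1) (t + 1) := by
      ext x; simp [Finset.mem_Ioc, Finset.mem_Ico]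
    rw [h1, Finset.sum_Ico_eq_sum_range]
    have h2 : t + 1 - (tg + 1) = t - tg := by omega
    rw [h2]
    have h3 := Finset.sum_range_sub' (fun i => F (tg + i)) (t - tg)
    rw [show tg + (t - tg) = t from by omega] at h3
    simp only [add_zero] at h3
    rw [← h3]
    refine Finset.sum_congr rfl fun i _ => ?_
    have h4 := hstep (tg + i)
    rw [show tg + 1 + i = tg + i + 1 from by ring]
    simp only [show tg + i + 1 = tg + (i + 1) from by ring] at h4 ⊢
    rw [← h4]
  rw [← htel]
  unfold blockBiasCS
  simp only [hF]
  ring
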